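/- A reflexive and transitive binary relation ≽ on F(Ω) is a regular stochastic order if and only if there exists a coherent, cash-subadditive loss measure ρ : F(Ω) → (−∞, +∞], i.e. a functional satisfying (a) ρ(cf) = c·ρ(f) for all c > 0, (b) ρ(f + g) ≤ ρ(f) + ρ(g), (c) f ≤ g pointwise implies ρ(f) ≥ ρ(g), (d) ρ(f + a) ≥ ρ(f) − a for all a ≥ 0, and (e) ρ(f) = ρ(f ∧ 0), such that ρ(−1) > 0 and, for all f, g ∈ F(Ω), f ≽ g holds if and only if ρ(f − g) ≤ 0. -/

import Mathlib

open Pointwise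

/-- A regular stochastic order on `F(Ω)`: a reflexive and transitive binary relation
satisfying (TRIV), (CONE), (CERT), (APPR) and (REST). -/
def IsRegularOrder {Ω : Type*} (R : (Ω → ℝ) → (Ω → ℝ) → Prop) : Prop :=
  Reflexive R ∧ Transitive R ∧
  -- (TRIV)
  ¬ R 0 1 ∧
  -- (CONE)
  (∀ f₁ g₁ f₂ g₂ : Ω → ℝ, ∀ a₁ a₂ : ℝ, R f₁ g₁ → R f₂ g₂ → 0 ≤ a₁ → 0 ≤ a₂ →
    R (a₁ • f₁ + a₂ • f₂) (a₁ • g₁ + a₂ • g₂)) ∧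
  -- (CERT)
  (∀ f : Ω → ℝ, (0 : Ω → ℝ) ≤ f → R f 0) ∧
  -- (APPR)
  (∀ f : Ω → ℝ, (∀ n : ℕ, R (f + fun _ => (2 : ℝ)⁻¹ ^ n) 0) → R f 0) ∧
  -- (REST)
  (∀ (f : Ω → ℝ) (A : Set Ω), R f 0 → R (A.indicator f) 0)


section Aux

variable {Ω : Type*} {R : (Ω → ℝ) → (Ω → ℝ) → Prop}

lemma aux_scale
    (hcone : ∀ f₁ g₁ f₂ g₂ : Ω → ℝ, ∀ a₁ a₂ : ℝ, R f₁ g₁ → R f₂ g₂ → 0 ≤ a₁ → 0 ≤ a₂ →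
      R (a₁ • f₁ + a₂ • f₂) (a₁ • g₁ + a₂ • g₂))
    {f : Ω → ℝ} {c : ℝ} (hc : 0 ≤ c) (hf : R f 0) : R (c • f) 0 := by
  have := hcone f 0 f 0 c 0 hf hf hc le_rfl
  simpa using this

lemma aux_add
    (hcone : ∀ f₁ g₁ f₂ g₂ : Ω → ℝ, ∀ a₁ a₂ : ℝ, R f₁ g₁ → R f₂ g₂ → 0 ≤ a₁ → 0 ≤ a₂ →
      R (a₁ • f₁ + a₂ • f₂) (a₁ • g₁ + a₂ • g₂))
    {f g : Ω → ℝ} (hf : R f 0) (hg : R g 0) : R (f + g) 0 := by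
  have := hcone f 0 g 0 1 1 hf hg zero_le_one zero_le_one
  simpa using this

lemma aux_mono
    (hcone : ∀ f₁ g₁ f₂ g₂ : Ω → ℝ, ∀ a₁ a₂ : ℝ, R f₁ g₁ → R f₂ g₂ → 0 ≤ a₁ → 0 ≤ a₂ →
      R (a₁ • f₁ + a₂ • f₂) (a₁ • g₁ + a₂ • g₂))
    (hcert : ∀ f : Ω → ℝ, (0 : Ω → ℝ) ≤ f → R f 0)
    {f g : Ω → ℝ} (hfg : f ≤ g) (hf : R f 0) : R g 0 := by
  have h1 : R (g - f) 0 := hcert _ (fun ω => by simpa using hfg ω)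
  have := aux_add hcone h1 hf
  simpa using this

lemma aux_sub
    (hrefl : Reflexive R)
    (hcone : ∀ f₁ g₁ f₂ g₂ : Ω → ℝ, ∀ a₁ a₂ : ℝ, R f₁ g₁ → R f₂ g₂ → 0 ≤ a₁ → 0 ≤ a₂ →
      R (a₁ • f₁ + a₂ • f₂) (a₁ • g₁ + a₂ • g₂))
    (f g : Ω → ℝ) : R f g ↔ R (f - g) 0 := by
  constructor
  · intro h
    have := hcone f g (-g) (-g) 1 1 h (hrefl _) zero_le_one zero_le_one
    simpa [sub_eq_add_neg] using this
  · intro h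
    have := hcone (f - g) 0 g g 1 1 h (hrefl _) zero_le_one zero_le_one
    simpa using this

end Aux

/-- Theorem: a reflexive transitive relation is a regular stochastic order iff it is
induced, via `f ≽ g ↔ ρ(f - g) ≤ 0`, by a coherent cash-subadditive loss measure `ρ`
with `ρ(-1) > 0`.  The loss measure takes values in `(-∞, +∞]`, modelled as `EReal`
values different from `⊥`. -/
theorem stmt_1 {Ω : Type*} [Nonempty Ω] (R : (Ω → ℝ) → (Ω → ℝ) → Prop)
    (hrefl : Reflexive R) (htrans : Transitive R) :
    IsRegularOrder R ↔
      ∃ ρ : (Ω → ℝ) → EReal,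
        (∀ f, ρ f ≠ ⊥) ∧
        -- (a) positive homogeneity
        (∀ c : ℝ, 0 < c → ∀ f, ρ (c • f) = (c : EReal) * ρ f) ∧
        -- (b) subadditivity
        (∀ f g, ρ (f + g) ≤ ρ f + ρ g) ∧
        -- (c) inverse monotonicity
        (∀ f g, f ≤ g → ρ g ≤ ρ f) ∧
        -- (d) cash subadditivity
        (∀ f, ∀ a : ℝ, 0 ≤ a → ρ f - (a : EReal) ≤ ρ (f + fun _ => a)) ∧
        -- (e) loss measure
        (∀ f, ρ f = ρ fun ω => min (f ω) 0) ∧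
        -- ρ(-1) > 0
        (0 : EReal) < ρ (fun _ => (-1 : ℝ)) ∧
        -- the order is induced by ρ
        (∀ f g, R f g ↔ ρ (f - g) ≤ 0) := by
  constructor
  · rintro ⟨-, -, htriv, hcone, hcert, happr, hrest⟩
    classical
    set S : (Ω → ℝ) → Set ℝ := fun f => {a : ℝ | 0 ≤ a ∧ R (f + fun _ => a) 0} with hSdef
    have hbdd : ∀ f, BddBelow (S f) := fun f => ⟨0, fun a ha => ha.1⟩
    set ρ : (Ω → ℝ) → EReal :=
      fun f => if h : (S f).Nonempty then ((sInf (S f) : ℝ) : EReal) else ⊤ with hρdef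
    have hρ_of_ne : ∀ {f : Ω → ℝ}, (S f).Nonempty → ρ f = ((sInf (S f) : ℝ) : EReal) := by
      intro f h; simp [hρdef, h]
    have hρ_of_e : ∀ {f : Ω → ℝ}, ¬ (S f).Nonempty → ρ f = ⊤ := by
      intro f h; simp [hρdef, h]
    have hρ_le : ∀ {f : Ω → ℝ} {a : ℝ}, a ∈ S f → ρ f ≤ (a : EReal) := by
      intro f a ha
      rw [hρ_of_ne ⟨a, ha⟩]
      exact_mod_cast csInf_le (hbdd f) ha
    -- monotone membership
    have hSmono : ∀ {f g : Ω → ℝ}, f ≤ g → S f ⊆ S g := by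
      intro f g hfg a ha
      exact ⟨ha.1, aux_mono hcone hcert (fun ω => by simpa using add_le_add_right (hfg ω) a) ha.2⟩
    refine ⟨ρ, ?_, ?_, ?_, ?_, ?_, ?_, ?_, ?_⟩
    · -- never ⊥
      intro f
      by_cases h : (S f).Nonempty
      · rw [hρ_of_ne h]; exact EReal.coe_ne_bot _
      · rw [hρ_of_e h]; simp
    · -- positive homogeneity
      intro c hc f
      have hSc : S (c • f) = c • S f := by
        ext a
        constructor
        · rintro ⟨ha0, haR⟩
          refine ⟨c⁻¹ * a, ⟨by positivity, ?_⟩, by show c • (c⁻¹ * a) = a; rw [smul_eq_mul, ← mul_assoc, mul_inv_cancel₀ hc.ne', one_mul]⟩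
          have := aux_scale hcone (le_of_lt (by positivity : (0:ℝ) < c⁻¹)) haR
          have heq : c⁻¹ • (c • f + fun _ => a) = f + fun _ => c⁻¹ * a := by
            funext ω
            simp only [Pi.smul_apply, Pi.add_apply, smul_eq_mul]
            rw [mul_add, ← mul_assoc, inv_mul_cancel₀ hc.ne', one_mul]
          rwa [heq] at this
        · rintro ⟨b, ⟨hb0, hbR⟩, rfl⟩
          refine ⟨by positivity, ?_⟩
          have := aux_scale hcone hc.le hbR
          have heq : c • (f + fun _ => b) = c • f + fun _ => c • b := by
            funext ω
            simp only [Pi.smul_apply, Pi.add_apply, smul_eq_mul]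
            ring
          rwa [heq] at this
      by_cases h : (S f).Nonempty
      · have h2 : (S (c • f)).Nonempty := by
          rw [hSc]; exact h.image _
        rw [hρ_of_ne h, hρ_of_ne h2, hSc, Real.sInf_smul_of_nonneg hc.le]
        simp [smul_eq_mul, EReal.coe_mul]
      · have h2 : ¬ (S (c • f)).Nonempty := by
          rw [hSc]; intro ⟨x, b, hb, _⟩; exact h ⟨b, hb⟩
        rw [hρ_of_e h, hρ_of_e h2, EReal.coe_mul_top_of_pos hc]
    · -- subadditivity
      intro f g
      have hmem : ∀ {a b : ℝ}, a ∈ S f → b ∈ S g → a + b ∈ S (f + g) := by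
        intro a b ha hb
        refine ⟨add_nonneg ha.1 hb.1, ?_⟩
        have := aux_add hcone ha.2 hb.2
        have heq : (f + fun _ => a) + (g + fun _ => b) = (f + g) + fun _ => a + b := by
          funext ω; simp; ring
        rwa [heq] at this
      by_cases hf : (S f).Nonempty
      · by_cases hg : (S g).Nonempty
        · obtain ⟨a₀, ha₀⟩ := id hf
          obtain ⟨b₀, hb₀⟩ := id hg
          have hfg : (S (f + g)).Nonempty := ⟨a₀ + b₀, hmem ha₀ hb₀⟩
          rw [hρ_of_ne hf, hρ_of_ne hg, hρ_of_ne hfg, ← EReal.coe_add, EReal.coe_le_coe_iff]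
          have key : ∀ b ∈ S g, sInf (S (f + g)) - b ≤ sInf (S f) := by
            intro b hb
            refine le_csInf hf (fun a ha => ?_)
            have := csInf_le (hbdd _) (hmem ha hb)
            linarith
          have : sInf (S (f + g)) - sInf (S f) ≤ sInf (S g) := by
            refine le_csInf hg (fun b hb => ?_)
            have := key b hb; linarith
          linarith
        · rw [hρ_of_e hg, EReal.add_top_of_ne_bot]
          · exact le_top
          · by_cases h : (S f).Nonempty
            · rw [hρ_of_ne h]; exact EReal.coe_ne_bot _
            · rw [hρ_of_e h]; simp
      · rw [hρ_of_e hf, EReal.top_add_of_ne_bot]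
        · exact le_top
        · by_cases h : (S g).Nonempty
          · rw [hρ_of_ne h]; exact EReal.coe_ne_bot _
          · rw [hρ_of_e h]; simp
    · -- inverse monotonicity
      intro f g hfg
      by_cases hf : (S f).Nonempty
      · have hg : (S g).Nonempty := hf.mono (hSmono hfg)
        rw [hρ_of_ne hf, hρ_of_ne hg, EReal.coe_le_coe_iff]
        exact csInf_le_csInf (hbdd g) hf (hSmono hfg)
      · rw [hρ_of_e hf]; exact le_top
    · -- cash subadditivity
      intro f a ha
      by_cases h : (S (f + fun _ => a)).Nonempty
      · have hmem : ∀ {b : ℝ}, b ∈ S (f + fun _ => a) → a + b ∈ S f := by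
          intro b hb
          refine ⟨by linarith [hb.1], ?_⟩
          have := hb.2
          have heq : ((f + fun _ => a) + fun _ => b) = f + fun _ => a + b := by
            funext ω; simp; ring
          rwa [heq] at this
        obtain ⟨b₀, hb₀⟩ := id h
        have hf : (S f).Nonempty := ⟨a + b₀, hmem hb₀⟩
        rw [hρ_of_ne hf, hρ_of_ne h, ← EReal.coe_sub, EReal.coe_le_coe_iff]
        refine le_csInf h (fun b hb => ?_)
        have := csInf_le (hbdd f) (hmem hb)
        linarith
      · rw [hρ_of_e h]; exact le_top
    · -- loss measure
      intro f
      have hSeq : S f = S (fun ω => min (f ω) 0) := by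
        apply Set.Subset.antisymm
        · intro a ha
          refine ⟨ha.1, ?_⟩
          set A : Set Ω := {ω | f ω < 0} with hA
          have h1 : R (A.indicator (f + fun _ => a)) 0 := hrest _ A ha.2
          have h2 : (0 : Ω → ℝ) ≤ ((fun ω => min (f ω) 0) + fun _ => a) - A.indicator (f + fun _ => a) := by
            intro ω
            by_cases hω : ω ∈ A
            · have : f ω < 0 := hω
              simp [Set.indicator_apply, hω, min_eq_left this.le]
            · have : 0 ≤ f ω := not_lt.1 hω
              simp [Set.indicator_apply, hω, min_eq_right this, ha.1]
          have := aux_add hcone (hcert _ h2) h1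
          simpa using this
        · exact hSmono (fun ω => min_le_left _ _)
      simp only [hρdef]
      rw [hSeq]
    · -- ρ(-1) > 0
      have h1 : (1 : ℝ) ∈ S (fun _ => (-1 : ℝ)) := by
        refine ⟨zero_le_one, ?_⟩
        exact hcert _ (fun ω => by norm_num)
      have hge : ∀ a ∈ S (fun _ => (-1 : ℝ)), (1 : ℝ) ≤ a := by
        intro a ha
        by_contra hlt
        push_neg at hlt
        have ha2 : R (fun _ => a - 1) 0 := by
          have := ha.2
          have heq : ((fun _ => (-1:ℝ)) + fun _ => a : Ω → ℝ) = fun _ => a - 1 := by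
            funext ω; simp; ring
          rwa [heq] at this
        have hc : (0:ℝ) < (1 - a)⁻¹ := inv_pos.2 (by linarith)
        have := aux_scale hcone hc.le ha2
        have heq : (1 - a)⁻¹ • (fun _ => a - 1) = fun _ : Ω => (-1 : ℝ) := by
          funext ω
          simp only [Pi.smul_apply, smul_eq_mul]
          have hne : (1 - a) ≠ 0 := by linarith
          field_simp
          ring
        rw [heq] at this
        have := hcone (fun _ => (-1:ℝ)) 0 1 1 1 1 this (hrefl _) zero_le_one zero_le_one
        simp only [one_smul] at this
        have heq2 : ((fun _ => (-1:ℝ)) + 1) = (0 : Ω → ℝ) := by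
          funext ω; simp
        rw [heq2, zero_add] at this
        exact htriv this
      have hne : (S (fun _ => (-1 : ℝ))).Nonempty := ⟨1, h1⟩
      rw [hρ_of_ne hne]
      have : (1:ℝ) ≤ sInf (S (fun _ => (-1:ℝ))) := le_csInf hne hge
      exact EReal.coe_pos.mpr (by linarith)
    · -- induced order
      intro f g
      rw [aux_sub hrefl hcone f g]
      set h := f - g with hh
      constructor
      · intro hR
        have heq0 : (h + fun _ => (0:ℝ)) = h := by funext ω; simp
        have : (0:ℝ) ∈ S h := ⟨le_rfl, by rw [heq0]; exact hR⟩
        have := hρ_le this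
        simpa using this
      · intro hρh
        have hne : (S h).Nonempty := by
          by_contra hc
          rw [hρ_of_e hc] at hρh
          exact absurd hρh (by simp)
        rw [hρ_of_ne hne] at hρh
        have hinf : sInf (S h) ≤ 0 := by exact_mod_cast hρh
        apply happr
        intro n
        have hpos : (0:ℝ) < (2:ℝ)⁻¹ ^ n := by positivity
        obtain ⟨a, haS, halt⟩ := exists_lt_of_csInf_lt hne (lt_of_le_of_lt hinf hpos)
        exact aux_mono hcone hcert
          (fun ω => by simpa using add_le_add_left halt.le (h ω)) haS.2
  · rintro ⟨ρ, hbot, hhom, hsubadd, hmono, hcash, hloss, hneg, hord⟩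
    have hρ0 : ρ 0 ≤ 0 := by
      have := (hord 0 0).1 (hrefl 0)
      simpa using this
    have hscale : ∀ (a : ℝ), 0 ≤ a → ∀ h : Ω → ℝ, ρ h ≤ 0 → ρ (a • h) ≤ 0 := by
      intro a ha h hh
      rcases ha.eq_or_lt with rfl | ha'
      · simpa [zero_smul] using hρ0
      · rw [hhom a ha' h]
        exact mul_nonpos_of_nonneg_of_nonpos (by exact_mod_cast ha) hh
    refine ⟨hrefl, htrans, ?_, ?_, ?_, ?_, ?_⟩
    · -- TRIV
      intro h
      rw [hord] at h
      have heq : ((0 : Ω → ℝ) - 1) = fun _ => (-1 : ℝ) := by funext ω; simp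
      rw [heq] at h
      exact absurd h (not_le.2 hneg)
    · -- CONE
      intro f₁ g₁ f₂ g₂ a₁ a₂ h1 h2 ha1 ha2
      rw [hord] at h1 h2 ⊢
      have heq : (a₁ • f₁ + a₂ • f₂) - (a₁ • g₁ + a₂ • g₂)
          = a₁ • (f₁ - g₁) + a₂ • (f₂ - g₂) := by
        funext ω; simp [smul_eq_mul]; ring
      rw [heq]
      calc ρ (a₁ • (f₁ - g₁) + a₂ • (f₂ - g₂))
          ≤ ρ (a₁ • (f₁ - g₁)) + ρ (a₂ • (f₂ - g₂)) := hsubadd _ _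
        _ ≤ 0 + 0 := add_le_add (hscale _ ha1 _ h1) (hscale _ ha2 _ h2)
        _ = 0 := by simp
    · -- CERT
      intro f hf
      rw [hord]
      rw [sub_zero]
      exact le_trans (hmono 0 f hf) hρ0
    · -- APPR
      intro f hf
      rw [hord, sub_zero]
      have key : ∀ n : ℕ, ρ f ≤ ((2 : ℝ)⁻¹ ^ n : ℝ) := by
        intro n
        have h1 := (hord _ 0).1 (hf n)
        rw [sub_zero] at h1
        have h2 := hcash f ((2:ℝ)⁻¹ ^ n) (by positivity)
        have h3 : ρ f - (((2:ℝ)⁻¹ ^ n : ℝ) : EReal) ≤ 0 := le_trans h2 h1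
        have := EReal.sub_le_iff_le_add (a := ρ f) (b := (((2:ℝ)⁻¹ ^ n : ℝ) : EReal)) (c := 0)
          (Or.inl (EReal.coe_ne_bot _)) (Or.inl (EReal.coe_ne_top _)) |>.1 h3
        simpa using this
      by_contra hcon
      push_neg at hcon
      have hne_top : ρ f ≠ ⊤ := by
        intro h
        have := key 0
        rw [h] at this
        exact EReal.coe_ne_top _ (top_le_iff.1 this)
      lift ρ f to ℝ using ⟨hne_top, hbot f⟩ with r hr
      have hr0 : 0 < r := by exact_mod_cast hcon
      obtain ⟨n, hn⟩ := exists_pow_lt_of_lt_one hr0 (by norm_num : (2:ℝ)⁻¹ < 1)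
      have := key n
      rw [show (((2:ℝ)⁻¹ ^ n : ℝ) : EReal) = (((2:ℝ)⁻¹ ^ n : ℝ) : EReal) from rfl] at this
      have : r ≤ (2:ℝ)⁻¹ ^ n := by exact_mod_cast this
      linarith
    · -- REST
      intro f A hf
      rw [hord, sub_zero] at hf ⊢
      rw [hloss (A.indicator f)]
      rw [hloss f] at hf
      refine le_trans (hmono _ _ ?_) hf
      intro ω
      by_cases hω : ω ∈ A
      · simp [Set.indicator_apply, hω]
      · simp [Set.indicator_apply, hω, min_le_right]
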